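/- For any category C equipped with a flow (T, u, μ), the interleaving distance d_(C,T) is an extended pseudometric on the objects of C: for all objects a, b, c one has d_(C,T)(a,a) = 0, d_(C,T)(a,b) = d_(C,T)(b,a), and d_(C,T)(a,c) ≤ d_(C,T)(a,b) + d_(C,T)(b,c), where the values are taken in [0,∞]. -/

import Mathlib

open CategoryTheory
open scoped NNReal ENNReal

universe v u

/-- A flow on a category `C`: a lax monoidal action of `([0,∞), ≤, +)` on `C`. -/
structure CatFlow (C : Type u) [Category.{v} C] where
  /-- the `ε`-translation endofunctors -/
  T : ℝ≥0 → C ⥤ C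
  /-- the natural transformations `T ε ⟶ T ζ` for `ε ≤ ζ` -/
  Tle : ∀ {ε ζ : ℝ≥0}, ε ≤ ζ → (T ε ⟶ T ζ)
  Tle_refl : ∀ ε : ℝ≥0, Tle (le_refl ε) = 𝟙 (T ε)
  Tle_trans : ∀ {ε ζ δ : ℝ≥0} (h₁ : ε ≤ ζ) (h₂ : ζ ≤ δ), Tle h₁ ≫ Tle h₂ = Tle (h₁.trans h₂)
  /-- the unit coherence natural transformation `𝟭 C ⟶ T 0` -/
  u : 𝟭 C ⟶ T 0
  /-- the multiplication coherence transformations; note `(T ζ ⋙ T ε).obj a = (T ε).obj ((T ζ).obj a)`,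
  which is the composite `T_ε ∘ T_ζ` of the paper. -/
  μ : ∀ ε ζ : ℝ≥0, T ζ ⋙ T ε ⟶ T (ε + ζ)
  unit_left : ∀ (ε : ℝ≥0) (a : C),
    u.app ((T ε).obj a) ≫ (μ 0 ε).app a = eqToHom (by simp)
  unit_right : ∀ (ε : ℝ≥0) (a : C),
    (T ε).map (u.app a) ≫ (μ ε 0).app a = eqToHom (by simp)
  assoc : ∀ (ε ζ δ : ℝ≥0) (a : C),
    (μ ε ζ).app ((T δ).obj a) ≫ (μ (ε + ζ) δ).app a
      = (T ε).map ((μ ζ δ).app a) ≫ (μ ε (ζ + δ)).app a ≫ eqToHom (by rw [add_assoc])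
  compat : ∀ {ε ζ δ κ : ℝ≥0} (h₁ : ε ≤ δ) (h₂ : ζ ≤ κ) (a : C),
    (μ ε ζ).app a ≫ (Tle (add_le_add h₁ h₂)).app a
      = (T ε).map ((Tle h₂).app a) ≫ (Tle h₁).app ((T κ).obj a) ≫ (μ δ κ).app a

/-- `(φ, ψ)` is a weak `ε`-interleaving of `a` and `b`. -/
structure IsWeakInterleaving {C : Type u} [Category.{v} C] (F : CatFlow C) (ε : ℝ≥0)
    (a b : C) (φ : a ⟶ (F.T ε).obj b) (ψ : b ⟶ (F.T ε).obj a) : Prop where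
  left : φ ≫ (F.T ε).map ψ ≫ (F.μ ε ε).app a
      = F.u.app a ≫ (F.Tle ((zero_le : (0 : ℝ≥0) ≤ ε + ε))).app a
  right : ψ ≫ (F.T ε).map φ ≫ (F.μ ε ε).app b
      = F.u.app b ≫ (F.Tle ((zero_le : (0 : ℝ≥0) ≤ ε + ε))).app b

/-- `a` and `b` are weakly `ε`-interleaved. -/
def WeaklyInterleaved {C : Type u} [Category.{v} C] (F : CatFlow C) (ε : ℝ≥0) (a b : C) : Prop :=
  ∃ φ ψ, IsWeakInterleaving F ε a b φ ψ

/-- The interleaving distance associated to a flow. -/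
noncomputable def interleavingDist {C : Type u} [Category.{v} C] (F : CatFlow C) (a b : C) :
    ℝ≥0∞ :=
  sInf { x : ℝ≥0∞ | ∃ ε : ℝ≥0, x = ε ∧ WeaklyInterleaved F ε a b }

section Aux
variable {C : Type u} [Category.{v} C] (F : CatFlow C)

lemma Tle_app_comp {ε ζ δ : ℝ≥0} (h₁ : ε ≤ ζ) (h₂ : ζ ≤ δ) (a : C) :
    (F.Tle h₁).app a ≫ (F.Tle h₂).app a = (F.Tle (h₁.trans h₂)).app a := by
  rw [← NatTrans.comp_app, F.Tle_trans]

lemma eqToHom_eq_Tle {ε ζ : ℝ≥0} (h : ε = ζ) (a : C) :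
    (eqToHom (show (F.T ε).obj a = (F.T ζ).obj a by rw [h]) : _) = (F.Tle h.le).app a := by
  subst h; simp [F.Tle_refl]

lemma μ_Tle_left {ε δ ζ : ℝ≥0} (h : ε ≤ δ) (a : C) :
    (F.Tle h).app ((F.T ζ).obj a) ≫ (F.μ δ ζ).app a
      = (F.μ ε ζ).app a ≫ (F.Tle (add_le_add h le_rfl)).app a := by
  have := F.compat h (le_refl ζ) a
  rw [F.Tle_refl] at this
  simpa using this.symm

lemma μ_Tle_right {ε ζ κ : ℝ≥0} (h : ζ ≤ κ) (a : C) :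
    (F.T ε).map ((F.Tle h).app a) ≫ (F.μ ε κ).app a
      = (F.μ ε ζ).app a ≫ (F.Tle (add_le_add le_rfl h)).app a := by
  have := F.compat (le_refl ε) h a
  rw [F.Tle_refl] at this
  simpa using this.symm

lemma key' {ε ζ δ : ℝ≥0} {a b c : C}
    (φ₁ : a ⟶ (F.T ε).obj b) (ψ₁ : b ⟶ (F.T ε).obj a)
    (φ₂ : b ⟶ (F.T ζ).obj c) (ψ₂ : c ⟶ (F.T ζ).obj b)
    (h₁ : ε + ζ ≤ δ) (h₂ : ζ + ε ≤ δ)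
    (H1 : φ₁ ≫ (F.T ε).map ψ₁ ≫ (F.μ ε ε).app a
        = F.u.app a ≫ (F.Tle ((zero_le : (0 : ℝ≥0) ≤ ε + ε))).app a)
    (H2 : φ₂ ≫ (F.T ζ).map ψ₂ ≫ (F.μ ζ ζ).app b
        = F.u.app b ≫ (F.Tle ((zero_le : (0 : ℝ≥0) ≤ ζ + ζ))).app b) :
    (φ₁ ≫ (F.T ε).map φ₂ ≫ (F.μ ε ζ).app c ≫ (F.Tle h₁).app c) ≫
      (F.T δ).map (ψ₂ ≫ (F.T ζ).map ψ₁ ≫ (F.μ ζ ε).app a ≫ (F.Tle h₂).app a) ≫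
      (F.μ δ δ).app a
    = F.u.app a ≫ (F.Tle ((zero_le : (0 : ℝ≥0) ≤ δ + δ))).app a := by
  have Hin : ε ≤ ζ + δ := (le_self_add.trans h₁).trans le_add_self
  have A1' : (F.T ζ).map ((F.μ ζ ε).app a) ≫ (F.μ ζ (ζ + ε)).app a
      = (F.μ ζ ζ).app ((F.T ε).obj a) ≫ (F.μ (ζ + ζ) ε).app a
          ≫ (F.Tle (add_assoc ζ ζ ε).le).app a := by
    rw [reassoc_of% (F.assoc ζ ζ ε a), eqToHom_eq_Tle F (add_assoc ζ ζ ε).symm a,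
      Tle_app_comp, F.Tle_refl]
    simp
  have X : φ₂ ≫ (F.T ζ).map (ψ₂ ≫ (F.T ζ).map ψ₁ ≫ (F.μ ζ ε).app a ≫ (F.Tle h₂).app a)
        ≫ (F.μ ζ δ).app a
      = ψ₁ ≫ (F.Tle Hin).app a := by
    simp only [Functor.map_comp, Category.assoc]
    rw [μ_Tle_right F h₂ a]
    rw [reassoc_of% A1']
    have nat3 := (F.μ ζ ζ).naturality ψ₁
    simp only [Functor.comp_map] at nat3
    rw [reassoc_of% nat3]
    rw [reassoc_of% H2]
    have nat4 := (F.Tle ((zero_le : (0 : ℝ≥0) ≤ ζ + ζ))).naturality ψ₁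
    rw [← reassoc_of% nat4]
    have nat5 := F.u.naturality ψ₁
    simp only [Functor.id_map] at nat5
    rw [← reassoc_of% nat5]
    rw [reassoc_of% (μ_Tle_left F ((zero_le : (0 : ℝ≥0) ≤ ζ + ζ)) a)]
    rw [reassoc_of% (F.unit_left ε a), eqToHom_eq_Tle F (zero_add ε).symm a]
    simp only [Tle_app_comp]
  have A2 : (F.μ ε ζ).app ((F.T δ).obj a) ≫ (F.μ (ε + ζ) δ).app a
      = (F.T ε).map ((F.μ ζ δ).app a) ≫ (F.μ ε (ζ + δ)).app a
          ≫ (F.Tle (add_assoc ε ζ δ).symm.le).app a := by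
    rw [F.assoc, eqToHom_eq_Tle F (add_assoc ε ζ δ).symm a]
  simp only [Category.assoc]
  have nat1 := (F.Tle h₁).naturality
    (ψ₂ ≫ (F.T ζ).map ψ₁ ≫ (F.μ ζ ε).app a ≫ (F.Tle h₂).app a)
  rw [← reassoc_of% nat1]
  rw [μ_Tle_left F h₁ a]
  have nat2 := (F.μ ε ζ).naturality
    (ψ₂ ≫ (F.T ζ).map ψ₁ ≫ (F.μ ζ ε).app a ≫ (F.Tle h₂).app a)
  simp only [Functor.comp_map] at nat2
  rw [← reassoc_of% nat2]
  rw [reassoc_of% A2]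
  simp only [Functor.map_comp, Category.assoc]
  have X2 := reassoc_of% (congrArg (fun f => (F.T ε).map f) X)
  simp only [Functor.map_comp, Category.assoc] at X2
  rw [X2]
  rw [reassoc_of% (μ_Tle_right F Hin a)]
  rw [reassoc_of% H1]
  simp only [Tle_app_comp]

end Aux

/-- The interleaving distance of a category with a flow is an extended pseudometric on
the objects: reflexivity, symmetry and the triangle inequality hold, with values in `[0,∞]`. -/
theorem interleavingDist_pseudometric {C : Type u} [Category.{v} C] (F : CatFlow C)
    (a b c : C) :
    interleavingDist F a a = 0 ∧
    interleavingDist F a b = interleavingDist F b a ∧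
    interleavingDist F a c ≤ interleavingDist F a b + interleavingDist F b c := by
  refine ⟨?_, ?_, ?_⟩
  · have refl0 : WeaklyInterleaved F 0 a a := by
      refine ⟨F.u.app a, F.u.app a, ⟨?_, ?_⟩⟩ <;>
      · rw [F.unit_right 0 a, eqToHom_eq_Tle F (add_zero 0).symm a]
    refine le_antisymm (sInf_le ⟨0, by simp, refl0⟩) zero_le
  · unfold interleavingDist
    congr 1
    ext x
    constructor <;> rintro ⟨ε, rfl, φ, ψ, h⟩ <;> exact ⟨ε, rfl, ψ, φ, ⟨h.right, h.left⟩⟩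
  · have comp : ∀ ε ζ : ℝ≥0, WeaklyInterleaved F ε a b → WeaklyInterleaved F ζ b c →
        WeaklyInterleaved F (ε + ζ) a c := by
      rintro ε ζ ⟨φ₁, ψ₁, hab⟩ ⟨φ₂, ψ₂, hbc⟩
      exact ⟨φ₁ ≫ (F.T ε).map φ₂ ≫ (F.μ ε ζ).app c ≫ (F.Tle (le_refl (ε + ζ))).app c,
        ψ₂ ≫ (F.T ζ).map ψ₁ ≫ (F.μ ζ ε).app a ≫ (F.Tle (add_comm ζ ε).le).app a,
        ⟨key' F φ₁ ψ₁ φ₂ ψ₂ (le_refl (ε + ζ)) (add_comm ζ ε).le hab.left hbc.left,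
         key' F ψ₂ φ₂ ψ₁ φ₁ (add_comm ζ ε).le (le_refl (ε + ζ)) hbc.right hab.right⟩⟩
    show interleavingDist F a c ≤ _
    unfold interleavingDist
    rw [ENNReal.sInf_add]
    refine le_iInf₂ fun x hx => ?_
    rw [add_comm, ENNReal.sInf_add]
    refine le_iInf₂ fun y hy => ?_
    obtain ⟨ε₁, rfl, w₁⟩ := hx
    obtain ⟨ε₂, rfl, w₂⟩ := hy
    refine sInf_le ⟨ε₁ + ε₂, ?_, comp ε₁ ε₂ w₁ w₂⟩
    rw [← ENNReal.coe_add, add_comm]
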